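/- Let f, g : (0,∞) → (0,∞). Then the GG-convex conjugate of the multiplicative inf-convolution is the pointwise product of the conjugates: (f ⊗ g)^◇(y) = f^◇(y) · g^◇(y) for all y ∈ (0,∞). -/

import Mathlib

open Real Set ENNReal

/-- The GG-convex conjugate of `f : (0,∞) → [0,∞)`:
`f^◇(y) = sup_{x>0} exp(log x · log y) / f x`, with values in `[0,∞]` and the
conventions `1/0 = ∞`, `1/∞ = 0` (realized by `ℝ≥0∞` division). -/
noncomputable def GGdiamond (f : ℝ → ℝ) : ℝ → ℝ≥0∞ := fun y =>
  ⨆ x ∈ Set.Ioi (0 : ℝ),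
    ENNReal.ofReal (Real.exp (Real.log x * Real.log y)) / ENNReal.ofReal (f x)

/-- The multiplicative inf-convolution of `f, g : (0,∞) → (0,∞)`:
`(f ⊗ g)(x) = inf { f x₁ · g x₂ | x₁, x₂ > 0, x₁ x₂ = x }`, with values in `[0,∞)`. -/
noncomputable def mconv (f g : ℝ → ℝ) : ℝ → ℝ := fun x =>
  sInf {z : ℝ | ∃ x₁ ∈ Set.Ioi (0 : ℝ), ∃ x₂ ∈ Set.Ioi (0 : ℝ),
    x₁ * x₂ = x ∧ z = f x₁ * g x₂}

/-- The GG-convex conjugate of a multiplicative inf-convolution is the pointwise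
product of the conjugates. -/


lemma ofReal_sInf_eq (S : Set ℝ) (hne : S.Nonempty) (h0 : ∀ a ∈ S, 0 ≤ a) :
    ENNReal.ofReal (sInf S) = ⨅ a ∈ S, ENNReal.ofReal a := by
  have hbdd : BddBelow S := ⟨0, fun a ha => h0 a ha⟩
  refine le_antisymm (le_iInf₂ fun a ha => ENNReal.ofReal_le_ofReal (csInf_le hbdd ha)) ?_
  refine ENNReal.le_of_forall_pos_le_add fun ε hε _ => ?_
  obtain ⟨a, ha, hlt⟩ := exists_lt_of_csInf_lt hne
    (lt_add_of_pos_right (sInf S) (by exact_mod_cast hε))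
  calc ⨅ a ∈ S, ENNReal.ofReal a ≤ ENNReal.ofReal a := iInf₂_le a ha
    _ ≤ ENNReal.ofReal (sInf S + (ε : ℝ)) := ENNReal.ofReal_le_ofReal hlt.le
    _ ≤ ENNReal.ofReal (sInf S) + ENNReal.ofReal (ε : ℝ) := ENNReal.ofReal_add_le
    _ = ENNReal.ofReal (sInf S) + ε := by rw [ENNReal.ofReal_coe_nnreal]

theorem ggdiamond_mconv (f g : ℝ → ℝ)
    (hf0 : ∀ x ∈ Set.Ioi (0 : ℝ), 0 < f x)
    (hg0 : ∀ x ∈ Set.Ioi (0 : ℝ), 0 < g x) :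
    ∀ y ∈ Set.Ioi (0 : ℝ),
      GGdiamond (mconv f g) y = GGdiamond f y * GGdiamond g y := by
  intro y hy
  set E : ℝ → ℝ≥0∞ := fun x => ENNReal.ofReal (Real.exp (Real.log x * Real.log y)) with hE
  set S : ℝ → Set ℝ := fun x => {z : ℝ | ∃ x₁ ∈ Set.Ioi (0 : ℝ), ∃ x₂ ∈ Set.Ioi (0 : ℝ),
    x₁ * x₂ = x ∧ z = f x₁ * g x₂} with hS
  have hSne : ∀ x ∈ Set.Ioi (0 : ℝ), (S x).Nonempty := fun x hx =>
    ⟨f x * g 1, x, hx, 1, Set.mem_Ioi.mpr one_pos, mul_one x, rfl⟩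
  have hS0 : ∀ x, ∀ z ∈ S x, 0 ≤ z := by
    rintro x z ⟨x₁, h₁, x₂, h₂, -, rfl⟩
    exact (mul_pos (hf0 x₁ h₁) (hg0 x₂ h₂)).le
  have prod_eq : ∀ x₁ ∈ Set.Ioi (0 : ℝ), ∀ x₂ ∈ Set.Ioi (0 : ℝ),
      E (x₁ * x₂) * (ENNReal.ofReal (f x₁ * g x₂))⁻¹
        = (E x₁ / ENNReal.ofReal (f x₁)) * (E x₂ / ENNReal.ofReal (g x₂)) := by
    intro x₁ h₁ x₂ h₂
    have hEe : E (x₁ * x₂) = E x₁ * E x₂ := by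
      simp only [hE]
      rw [Real.log_mul (ne_of_gt h₁) (ne_of_gt h₂), add_mul, Real.exp_add,
        ENNReal.ofReal_mul (Real.exp_pos _).le]
    rw [hEe, ENNReal.ofReal_mul (hf0 x₁ h₁).le,
      ENNReal.mul_inv (Or.inr ENNReal.ofReal_ne_top) (Or.inl ENNReal.ofReal_ne_top),
      div_eq_mul_inv, div_eq_mul_inv, mul_mul_mul_comm]
  have lhs_eq : GGdiamond (mconv f g) y
      = ⨆ x ∈ Set.Ioi (0 : ℝ), ⨆ z ∈ S x, E x * (ENNReal.ofReal z)⁻¹ := by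
    simp only [GGdiamond]
    refine iSup_congr fun x => iSup_congr fun hx => ?_
    rw [div_eq_mul_inv]
    have : mconv f g x = sInf (S x) := rfl
    rw [this, ofReal_sInf_eq (S x) (hSne x hx) (hS0 x)]
    simp only [ENNReal.inv_iInf, ENNReal.mul_iSup]
    rfl
  rw [lhs_eq]
  have rhs_eq : GGdiamond f y * GGdiamond g y
      = ⨆ x₂ ∈ Set.Ioi (0 : ℝ), ⨆ x₁ ∈ Set.Ioi (0 : ℝ),
          (E x₁ / ENNReal.ofReal (f x₁)) * (E x₂ / ENNReal.ofReal (g x₂)) := by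
    simp only [GGdiamond, ENNReal.iSup_mul, ENNReal.mul_iSup]
    rfl
  rw [rhs_eq]
  apply le_antisymm
  · refine iSup₂_le fun x hx => iSup₂_le fun z hz => ?_
    obtain ⟨x₁, h₁, x₂, h₂, hmul, rfl⟩ := hz
    calc E x * (ENNReal.ofReal (f x₁ * g x₂))⁻¹
        = (E x₁ / ENNReal.ofReal (f x₁)) * (E x₂ / ENNReal.ofReal (g x₂)) := by
          rw [← hmul]; exact prod_eq x₁ h₁ x₂ h₂
      _ ≤ _ := by
          refine le_trans ?_ (le_iSup₂ (f := fun x₂ (_ : x₂ ∈ Set.Ioi (0:ℝ)) =>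
            ⨆ x₁ ∈ Set.Ioi (0 : ℝ), (E x₁ / ENNReal.ofReal (f x₁)) * (E x₂ / ENNReal.ofReal (g x₂))) x₂ h₂)
          exact le_iSup₂ (f := fun x₁ (_ : x₁ ∈ Set.Ioi (0:ℝ)) =>
            (E x₁ / ENNReal.ofReal (f x₁)) * (E x₂ / ENNReal.ofReal (g x₂))) x₁ h₁
  · refine iSup₂_le fun x₂ h₂ => iSup₂_le fun x₁ h₁ => ?_
    rw [← prod_eq x₁ h₁ x₂ h₂]
    have hmem : f x₁ * g x₂ ∈ S (x₁ * x₂) := ⟨x₁, h₁, x₂, h₂, rfl, rfl⟩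
    refine le_trans ?_ (le_iSup₂ (f := fun x (_ : x ∈ Set.Ioi (0:ℝ)) =>
      ⨆ z ∈ S x, E x * (ENNReal.ofReal z)⁻¹) (x₁ * x₂) (Set.mem_Ioi.mpr (mul_pos (Set.mem_Ioi.mp h₁) (Set.mem_Ioi.mp h₂))))
    exact le_iSup₂ (f := fun z (_ : z ∈ S (x₁ * x₂)) =>
      E (x₁ * x₂) * (ENNReal.ofReal z)⁻¹) (f x₁ * g x₂) hmem
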